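/- If p > q ≥ 1 are coprime integers and [n_1, …, n_k] = −p/q, then q_k = q and q_{k+1} = p. -/

import Mathlib

/-- Negative continued fraction `[n_1, …, n_k] = n_1 - 1/[n_2, …, n_k]`,
with `ncf [n_k] = n_k` (note `1/0 = 0` in Lean, so the base case is correct). -/
def ncf : List ℤ → ℚ
  | [] => 0
  | n :: l => (n : ℚ) - 1 / ncf l

/-- First column of the matrix product ∏ [[nᵢ,-1],[1,0]]: (numerator, denominator). -/
def ncfP : List ℤ → ℤ × ℤ
  | [] => (1, 0)
  | a :: l => (a * (ncfP l).1 - (ncfP l).2, (ncfP l).1)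

/-- Second column of the same matrix product. -/
def ncfP2 : List ℤ → ℤ × ℤ
  | [] => (0, 1)
  | a :: l => (a * (ncfP2 l).1 - (ncfP2 l).2, (ncfP2 l).1)

lemma ncfP_det : ∀ l : List ℤ, (ncfP l).1 * (ncfP2 l).2 - (ncfP2 l).1 * (ncfP l).2 = 1
  | [] => by simp [ncfP, ncfP2]
  | a :: l => by
      simp only [ncfP, ncfP2]
      linear_combination ncfP_det l

lemma ncfP_sign : ∀ l : List ℤ, (∀ a ∈ l, a ≤ -2) →
    0 ≤ (-1 : ℤ) ^ (l.length + 1) * (ncfP l).2 ∧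
      (-1 : ℤ) ^ (l.length + 1) * (ncfP l).2 < (-1 : ℤ) ^ l.length * (ncfP l).1
  | [], _ => by simp [ncfP]
  | a :: l, h => by
      obtain ⟨h1, h2⟩ := ncfP_sign l (fun b hb => h b (List.mem_cons_of_mem a hb))
      have ha : a ≤ -2 := h a List.mem_cons_self
      simp only [ncfP, List.length_cons]
      set E : ℤ := (-1) ^ l.length with hE
      have e1 : (-1 : ℤ) ^ (l.length + 1) = -E := by rw [pow_succ]; ring
      have e2 : (-1 : ℤ) ^ (l.length + 1 + 1) = E := by rw [pow_succ, pow_succ]; ring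
      rw [e1] at h1 h2
      rw [e1, e2]
      have hX : 1 ≤ E * (ncfP l).1 := by linarith
      constructor
      · linarith
      · nlinarith [mul_nonneg (by linarith : (0:ℤ) ≤ -a - 2) (by linarith : (0:ℤ) ≤ E * (ncfP l).1)]

lemma ncf_eq : ∀ l : List ℤ, l ≠ [] → (∀ a ∈ l, a ≤ -2) →
    ncf l = ((ncfP l).1 : ℚ) / ((ncfP l).2 : ℚ) ∧ ncf l < -1
  | [], h, _ => absurd rfl h
  | a :: l, _, h => by
      have ha : a ≤ -2 := h a List.mem_cons_self
      match l with
      | [] =>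
          have hv : ncf [a] = (a : ℚ) := by simp [ncf]
          refine ⟨?_, ?_⟩
          · rw [hv]; simp [ncfP]
          · rw [hv]
            have : (a : ℚ) ≤ -2 := by exact_mod_cast ha
            linarith
      | b :: l' =>
          obtain ⟨hv, hlt⟩ := ncf_eq (b :: l') (by simp) (fun c hc => h c (List.mem_cons_of_mem a hc))
          have hsg := ncfP_sign (b :: l') (fun c hc => h c (List.mem_cons_of_mem a hc))
          have hA : ((ncfP (b :: l')).1 : ℚ) ≠ 0 := by
            have : (ncfP (b :: l')).1 ≠ 0 := by
              intro h0
              rw [h0] at hsg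
              simp at hsg
              rcases hsg with ⟨u, v⟩
              linarith
            exact_mod_cast this
          constructor
          · show (a : ℚ) - 1 / ncf (b :: l') = _
            rw [hv, one_div_div,
              show ncfP (a :: b :: l') =
                (a * (ncfP (b :: l')).1 - (ncfP (b :: l')).2, (ncfP (b :: l')).1) from rfl]
            push_cast
            field_simp
          · show (a : ℚ) - 1 / ncf (b :: l') < -1
            have hx0 : ncf (b :: l') < 0 := by linarith
            have : -1 < 1 / ncf (b :: l') := by
              rw [lt_div_iff_of_neg hx0]
              linarith
            have haq : (a : ℚ) ≤ -2 := by exact_mod_cast ha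
            linarith

/-- With `Q 0 = 0`, `Q 1 = 1` and `Q (j+1) = -Q (j-1) - n (k+1-j) * Q j` for
`j = 1, …, k` (entries `n_j ≤ -2`): if `p > q ≥ 1` are coprime integers and
`[n_1, …, n_k] = -p/q`, then `Q k = q` and `Q (k+1) = p`. -/
theorem qseq_last_terms
    (k : ℕ) (hk : 1 ≤ k) (n : ℕ → ℤ) (hn : ∀ j, 1 ≤ j → j ≤ k → n j ≤ -2)
    (Q : ℕ → ℤ) (hQ0 : Q 0 = 0) (hQ1 : Q 1 = 1)
    (hQ : ∀ j, 1 ≤ j → j ≤ k → Q (j + 1) = -Q (j - 1) - n (k + 1 - j) * Q j)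
    (p q : ℤ) (hq : 1 ≤ q) (hpq : q < p) (hcop : IsCoprime p q)
    (hncf : ncf ((List.range k).map fun i => n (i + 1)) = -(p : ℚ) / (q : ℚ)) :
    Q k = q ∧ Q (k + 1) = p := by
  set l : List ℤ := (List.range k).map fun i => n (i + 1) with hl
  have hlen : l.length = k := by simp [hl]
  have hmem : ∀ a ∈ l, a ≤ -2 := by
    intro a hamem
    simp only [hl, List.mem_map, List.mem_range] at hamem
    obtain ⟨i, hi, rfl⟩ := hamem
    exact hn (i + 1) (by omega) (by omega)
  have hne : l ≠ [] := by
    intro h0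
    rw [h0] at hlen
    simp at hlen
    omega
  obtain ⟨hv, hlt⟩ := ncf_eq l hne hmem
  obtain ⟨hs1, hs2⟩ := ncfP_sign l hmem
  rw [hlen] at hs1 hs2
  set A := (ncfP l).1 with hA
  set B := (ncfP l).2 with hB
  have hp0 : (0 : ℤ) < p := by linarith
  have heq : (A : ℚ) / (B : ℚ) = -(p : ℚ) / (q : ℚ) := by rw [← hv, hncf]
  have hq0 : ((q : ℤ) : ℚ) ≠ 0 := by
    have : (0 : ℚ) < (q : ℚ) := by exact_mod_cast hq.trans_lt' (by norm_num)
    positivity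
  have hBne : B ≠ 0 := by
    intro h0
    rw [h0] at heq
    simp only [Int.cast_zero, div_zero] at heq
    have : (p : ℚ) = 0 := by
      field_simp at heq
      linarith [heq]
    have : p = 0 := by exact_mod_cast this
    omega
  have hBneQ : ((B : ℤ) : ℚ) ≠ 0 := by exact_mod_cast hBne
  have hcross : A * q = -p * B := by
    have h := (div_eq_div_iff hBneQ hq0).mp heq
    exact_mod_cast h
  have hcopAB : IsCoprime A B :=
    ⟨(ncfP2 l).2, -(ncfP2 l).1, by linear_combination ncfP_det l⟩
  have hd1 : A ∣ p := by
    have h1 : A ∣ -p * B := by rw [← hcross]; exact dvd_mul_right A q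
    have h2 : A ∣ -p := hcopAB.dvd_of_dvd_mul_right h1
    exact (dvd_neg).mp h2
  have hd2 : p ∣ A := by
    have h1 : p ∣ A * q := by
      rw [hcross]
      exact ⟨-B, by ring⟩
    exact hcop.dvd_of_dvd_mul_right h1
  have habs : A = p ∨ A = -p := by
    have h1 : A.natAbs ∣ p.natAbs := Int.natAbs_dvd_natAbs.mpr hd1
    have h2 : p.natAbs ∣ A.natAbs := Int.natAbs_dvd_natAbs.mpr hd2
    have := Nat.dvd_antisymm h1 h2
    exact Int.natAbs_eq_natAbs_iff.mp this
  -- the key recursion lemma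
  have hdrop : ∀ j, j < k → l.drop (k - j - 1) = n (k - j) :: l.drop (k - j) := by
    intro j hj
    have hlt : k - j - 1 < l.length := by omega
    rw [List.drop_eq_getElem_cons hlt]
    congr 1
    · simp only [hl, List.getElem_map, List.getElem_range]
      congr 1
      omega
    · congr 1
      omega
  have key : ∀ j, j ≤ k → Q (j + 1) = (-1 : ℤ) ^ j * (ncfP (l.drop (k - j))).1 ∧
      Q j = (-1 : ℤ) ^ (j + 1) * (ncfP (l.drop (k - j))).2 := by
    intro j
    induction j with
    | zero =>
      intro _
      have hnil : l.drop k = [] := by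
        apply List.drop_eq_nil_of_le
        omega
      rw [Nat.sub_zero, hnil]
      simp [ncfP, hQ1, hQ0]
    | succ j ih =>
      intro hjk
      obtain ⟨ih1, ih2⟩ := ih (by omega)
      have hd := hdrop j (by omega)
      have hk1 : k - (j + 1) = k - j - 1 := by omega
      rw [hk1, hd,
        show ncfP (n (k - j) :: l.drop (k - j)) =
          (n (k - j) * (ncfP (l.drop (k - j))).1 - (ncfP (l.drop (k - j))).2,
            (ncfP (l.drop (k - j))).1) from rfl]
      have hQj := hQ (j + 1) (by omega) hjk
      have hn1 : k + 1 - (j + 1) = k - j := by omega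
      rw [hn1] at hQj
      have hj1 : j + 1 - 1 = j := rfl
      rw [hj1] at hQj
      constructor
      · rw [hQj, ih1, ih2]
        ring
      · rw [ih1]
        ring
  obtain ⟨k1, k2⟩ := key k le_rfl
  rw [Nat.sub_self, List.drop_zero] at k1 k2
  rw [← hA] at k1
  rw [← hB] at k2
  rcases Nat.even_or_odd k with hE | hO
  · have e1 : (-1 : ℤ) ^ k = 1 := hE.neg_one_pow
    have e2 : (-1 : ℤ) ^ (k + 1) = -1 := (hE.add_one).neg_one_pow
    rw [e1, e2] at hs2
    rw [e1] at k1
    rw [e2] at hs1 k2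
    have hApos : 0 < A := by linarith
    have hAp : A = p := by
      rcases habs with h | h
      · exact h
      · omega
    have hBq : B = -q := by
      rw [hAp] at hcross
      have hpne : p ≠ 0 := by omega
      have := mul_left_cancel₀ hpne (by linarith : p * q = p * (-B))
      omega
    constructor
    · rw [k2, hBq]; ring
    · rw [k1, hAp]; ring
  · have e1 : (-1 : ℤ) ^ k = -1 := hO.neg_one_pow
    have e2 : (-1 : ℤ) ^ (k + 1) = 1 := (hO.add_one).neg_one_pow
    rw [e1, e2] at hs2
    rw [e1] at k1
    rw [e2] at hs1 k2
    have hAneg : A < 0 := by linarith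
    have hAp : A = -p := by
      rcases habs with h | h
      · omega
      · exact h
    have hBq : B = q := by
      rw [hAp] at hcross
      have hpne : p ≠ 0 := by omega
      exact mul_left_cancel₀ hpne (by linarith : p * B = p * q)
    constructor
    · rw [k2, hBq]; ring
    · rw [k1, hAp]; ring
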